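/- Let n, k be natural numbers with k ≤ n, and let N, R, M : ℝ → Matrix (Fin n) (Fin n) ℝ be in block form as N(t) = fromBlocks 𝒩₀₀(t) 𝒩₀₁(t) 𝒩₁₀(t) 𝒩₁₁(t) (and similarly for R, M), with (1,1)-blocks of size k×k, and let W : ℝ → Matrix (Fin (n−k)) (Fin k) ℝ with 𝔚(t) = fromBlocks 0 W(t) (−W(t)ᵀ) 0. Suppose N is differentiable, satisfies N′(t) = −N(t)² − N(t)·𝔚(t) − 𝔚(t)ᵀ·N(t) − R(t) + M(t), and that the bottom-left block satisfies 𝒩₁₀(t) = W(t)ᵀ for every t. Then (d/dt) trace(𝒩₁₁(t)) = −trace(𝒩₁₁(t)²) − 2·trace(𝒩₁₀(t)·𝒩₀₁(t)) − trace(𝒩₁₀(t)·𝒩₁₀(t)ᵀ) − trace(ℛ₁₁(t)) + trace(ℳ₁₁(t)) for every t. -/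

import Mathlib

open Matrix

attribute [local instance] Matrix.normedAddCommGroup Matrix.normedSpace

noncomputable def trace22CLM (p q : ℕ) :
    Matrix (Fin p ⊕ Fin q) (Fin p ⊕ Fin q) ℝ →L[ℝ] ℝ :=
  LinearMap.toContinuousLinearMap
    { toFun := fun A => trace A.toBlocks₂₂
      map_add' := by intro A B; simp [Matrix.toBlocks₂₂, Matrix.trace, Finset.sum_add_distrib]
      map_smul' := by intro c A; simp [Matrix.toBlocks₂₂, Matrix.trace, Finset.mul_sum] }

@[simp] lemma trace22CLM_apply (p q : ℕ) (A : Matrix (Fin p ⊕ Fin q) (Fin p ⊕ Fin q) ℝ) :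
    trace22CLM p q A = trace A.toBlocks₂₂ := rfl

lemma tb_add {p q : ℕ} (A B : Matrix (Fin p ⊕ Fin q) (Fin p ⊕ Fin q) ℝ) :
    (A + B).toBlocks₂₂ = A.toBlocks₂₂ + B.toBlocks₂₂ := rfl

lemma tb_sub {p q : ℕ} (A B : Matrix (Fin p ⊕ Fin q) (Fin p ⊕ Fin q) ℝ) :
    (A - B).toBlocks₂₂ = A.toBlocks₂₂ - B.toBlocks₂₂ := rfl

lemma tb_neg {p q : ℕ} (A : Matrix (Fin p ⊕ Fin q) (Fin p ⊕ Fin q) ℝ) :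
    (-A).toBlocks₂₂ = -A.toBlocks₂₂ := rfl

/-- Taking the trace of the bottom-right block of the matrix Riccati equation
`N′ = −N² − N𝔚 − 𝔚ᵀN − R + M` with `𝔚 = fromBlocks 0 W (−Wᵀ) 0` and
`𝒩₁₀ = Wᵀ` gives the evolution equation
`(tr 𝒩₁₁)′ = −tr(𝒩₁₁²) − 2 tr(𝒩₁₀𝒩₀₁) − tr(𝒩₁₀𝒩₁₀ᵀ) − tr ℛ₁₁ + tr ℳ₁₁`. -/
theorem riccati_block_trace (n k : ℕ) (hkn : k ≤ n)
    (N00 R00 M00 : ℝ → Matrix (Fin (n - k)) (Fin (n - k)) ℝ)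
    (N01 R01 M01 W : ℝ → Matrix (Fin (n - k)) (Fin k) ℝ)
    (N10 R10 M10 : ℝ → Matrix (Fin k) (Fin (n - k)) ℝ)
    (N11 R11 M11 : ℝ → Matrix (Fin k) (Fin k) ℝ)
    (N R M 𝔚 : ℝ → Matrix (Fin (n - k) ⊕ Fin k) (Fin (n - k) ⊕ Fin k) ℝ)
    (hN : ∀ t, N t = fromBlocks (N00 t) (N01 t) (N10 t) (N11 t))
    (hR : ∀ t, R t = fromBlocks (R00 t) (R01 t) (R10 t) (R11 t))
    (hM : ∀ t, M t = fromBlocks (M00 t) (M01 t) (M10 t) (M11 t))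
    (h𝔚 : ∀ t, 𝔚 t = fromBlocks 0 (W t) (-(W t)ᵀ) 0)
    (hNdiff : ∀ t : ℝ,
      HasDerivAt N
        (-(N t) ^ 2 - N t * 𝔚 t - (𝔚 t)ᵀ * N t - R t + M t) t)
    (hN10W : ∀ t, N10 t = (W t)ᵀ) :
    ∀ t : ℝ,
      HasDerivAt (fun s => trace (N11 s))
        (-trace ((N11 t) ^ 2) - 2 * trace (N10 t * N01 t)
          - trace (N10 t * (N10 t)ᵀ) - trace (R11 t) + trace (M11 t)) t := by
  intro t
  set L := trace22CLM (n - k) k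
  have hD := L.hasFDerivAt.comp_hasDerivAt t (hNdiff t)
  have hfun : (fun s => trace (N11 s)) = fun s => L (N s) := by
    funext s
    simp [L, hN s]
  rw [hfun]
  convert hD using 1
  · rfl
  · rfl
  · rfl
  show _ = trace (-N t ^ 2 - N t * 𝔚 t - (𝔚 t)ᵀ * N t - R t + M t).toBlocks₂₂
  rw [hN t, hR t, hM t, h𝔚 t]
  simp only [pow_two, fromBlocks_multiply, fromBlocks_transpose, transpose_neg,
    transpose_transpose, transpose_zero]
  simp only [tb_add, tb_sub, tb_neg, Matrix.toBlocks_fromBlocks₂₂]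
  simp only [Matrix.mul_zero, Matrix.zero_mul, Matrix.mul_neg, Matrix.neg_mul,
    add_zero, zero_add, trace_add, trace_sub, trace_neg, hN10W t, transpose_transpose]
  ring_nf
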